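/- Let ω > 0, γ ∈ ℝ, and fix (Ω, Σ, K, Φ) ∈ ℝ⁴. Define, for t ∈ ℝ, f₁(t) = (1/4)·( 2(2 − 3γ)·Ω·K + 6Ω·( −γ(Σ² + Ω² − 1) + 2Σ² + (Ω² − 1)·cos(2(Φ − tω)) + Ω² − 1 ) ), f₂(t) = (1/2)·Σ·( −3(γ − 2)(Σ² − 1) − 3(γ − 1)Ω² + (2 − 3γ)K + 3Ω²·cos(2(Φ − tω)) ), f₃(t) = K·( −3γ(Σ² + Ω² − 1) + (2 − 3γ)K + 6Σ² + 3Ω²·cos(2(Φ − tω)) + 3Ω² − 2 ), f₄(t) = 3·sin(Φ − tω)·cos(Φ − tω). Then, with L = 2π/ω, the time averages (1/L)·∫₀^L fᵢ(t) dt equal, respectively: (1/2)·Ω·( −3(γ − 1)(Ω² − 1) − 3(γ − 2)Σ² + (2 − 3γ)K ), (1/2)·Σ·( −3(γ − 2)(Σ² − 1) − 3(γ − 1)Ω² + (2 − 3γ)K ), K·( −3(γ − 1)Ω² − 3(γ − 2)Σ² − (3γ − 2)(K − 1) ), and 0. -/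

import Mathlib

open Real intervalIntegral

lemma cos_int (ω Φ : ℝ) (hω : 0 < ω) :
    ∫ t in (0:ℝ)..(2 * Real.pi / ω), Real.cos (2 * (Φ - t * ω)) = 0 := by
  have hω' : ω ≠ 0 := ne_of_gt hω
  have key : ∀ t ∈ Set.uIcc (0:ℝ) (2 * Real.pi / ω),
      HasDerivAt (fun t => -(1/(2*ω)) * Real.sin (2 * (Φ - t * ω)))
        (Real.cos (2 * (Φ - t * ω))) t := by
    intro t _
    have h1 : HasDerivAt (fun t : ℝ => 2 * (Φ - t * ω)) (2 * (-ω)) t := by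
      have := (((hasDerivAt_id t).mul_const ω).const_sub Φ).const_mul 2
      simpa using this
    have h2 := (Real.hasDerivAt_sin (2 * (Φ - t * ω))).comp t h1
    have h3 := h2.const_mul (-(1/(2*ω)))
    refine h3.congr_deriv ?_
    field_simp
  have hcont : IntervalIntegrable (fun t => Real.cos (2 * (Φ - t * ω)))
      MeasureTheory.volume 0 (2 * Real.pi / ω) := by
    exact (Real.continuous_cos.comp (by continuity)).intervalIntegrable _ _
  rw [intervalIntegral.integral_eq_sub_of_hasDerivAt key hcont]
  have hL : 2 * (Φ - (2 * Real.pi / ω) * ω) = (2 * Φ - 2 * Real.pi) - 2 * Real.pi := by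
    field_simp; ring
  simp only [hL, Real.sin_sub_two_pi]
  ring_nf

lemma sincos_int (ω Φ : ℝ) (hω : 0 < ω) :
    ∫ t in (0:ℝ)..(2 * Real.pi / ω), 3 * Real.sin (Φ - t * ω) * Real.cos (Φ - t * ω) = 0 := by
  have hω' : ω ≠ 0 := ne_of_gt hω
  have key : ∀ t ∈ Set.uIcc (0:ℝ) (2 * Real.pi / ω),
      HasDerivAt (fun t => (3/(4*ω)) * Real.cos (2 * (Φ - t * ω)))
        (3 * Real.sin (Φ - t * ω) * Real.cos (Φ - t * ω)) t := by
    intro t _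
    have h1 : HasDerivAt (fun t : ℝ => 2 * (Φ - t * ω)) (2 * (-ω)) t := by
      have := (((hasDerivAt_id t).mul_const ω).const_sub Φ).const_mul 2
      simpa using this
    have h2 := (Real.hasDerivAt_cos (2 * (Φ - t * ω))).comp t h1
    have h3 := h2.const_mul (3/(4*ω))
    refine h3.congr_deriv ?_
    rw [Real.sin_two_mul]
    field_simp
    ring
  have hcont : IntervalIntegrable (fun t => 3 * Real.sin (Φ - t * ω) * Real.cos (Φ - t * ω))
      MeasureTheory.volume 0 (2 * Real.pi / ω) := by
    apply Continuous.intervalIntegrable; continuity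
  rw [intervalIntegral.integral_eq_sub_of_hasDerivAt key hcont]
  have hL : 2 * (Φ - (2 * Real.pi / ω) * ω) = (2 * Φ - 2 * Real.pi) - 2 * Real.pi := by
    field_simp; ring
  simp only [hL, Real.cos_sub_two_pi]
  ring_nf

lemma avg_helper (ω Φ C1 C2 : ℝ) (hω : 0 < ω) :
    (1 / (2 * Real.pi / ω)) * ∫ t in (0:ℝ)..(2 * Real.pi / ω),
      (C1 + C2 * Real.cos (2 * (Φ - t * ω))) = C1 := by
  have hω' : ω ≠ 0 := ne_of_gt hω
  have hL : (2 * Real.pi / ω) ≠ 0 := by positivity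
  have h1 : IntervalIntegrable (fun _ : ℝ => C1) MeasureTheory.volume 0 (2 * Real.pi / ω) :=
    intervalIntegrable_const
  have h2 : IntervalIntegrable (fun t => C2 * Real.cos (2 * (Φ - t * ω)))
      MeasureTheory.volume 0 (2 * Real.pi / ω) := by
    apply Continuous.intervalIntegrable; continuity
  rw [intervalIntegral.integral_add h1 h2, intervalIntegral.integral_const_mul,
    cos_int ω Φ hω, intervalIntegral.integral_const]
  field_simp
  have hωi : ω * ω⁻¹ = 1 := mul_inv_cancel₀ hω'
  linear_combination (C1 * Real.pi * 2) * hωi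

/-- The time averages over one period `L = 2π/ω` of the components of the
leading-order Bianchi V vector field coincide with the components of the
averaged (guiding) Bianchi V system. -/
theorem bianchiV_time_averages (ω γ Ω S K Φ : ℝ) (hω : 0 < ω) :
    let L : ℝ := 2 * Real.pi / ω
    ((1 / L) * ∫ t in (0 : ℝ)..L,
        (1 / 4) * (2 * (2 - 3 * γ) * Ω * K +
          6 * Ω * (-γ * (S ^ 2 + Ω ^ 2 - 1) + 2 * S ^ 2 +
            (Ω ^ 2 - 1) * Real.cos (2 * (Φ - t * ω)) + Ω ^ 2 - 1))
      = (1 / 2) * Ω * (-(3 * (γ - 1)) * (Ω ^ 2 - 1) - 3 * (γ - 2) * S ^ 2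
          + (2 - 3 * γ) * K)) ∧
    ((1 / L) * ∫ t in (0 : ℝ)..L,
        (1 / 2) * S * (-(3 * (γ - 2)) * (S ^ 2 - 1) - 3 * (γ - 1) * Ω ^ 2
          + (2 - 3 * γ) * K + 3 * Ω ^ 2 * Real.cos (2 * (Φ - t * ω)))
      = (1 / 2) * S * (-(3 * (γ - 2)) * (S ^ 2 - 1) - 3 * (γ - 1) * Ω ^ 2
          + (2 - 3 * γ) * K)) ∧
    ((1 / L) * ∫ t in (0 : ℝ)..L,
        K * (-(3 * γ) * (S ^ 2 + Ω ^ 2 - 1) + (2 - 3 * γ) * K + 6 * S ^ 2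
          + 3 * Ω ^ 2 * Real.cos (2 * (Φ - t * ω)) + 3 * Ω ^ 2 - 2)
      = K * (-(3 * (γ - 1)) * Ω ^ 2 - 3 * (γ - 2) * S ^ 2
          - (3 * γ - 2) * (K - 1))) ∧
    ((1 / L) * ∫ t in (0 : ℝ)..L,
        3 * Real.sin (Φ - t * ω) * Real.cos (Φ - t * ω)) = 0 := by
  intro L
  refine ⟨?_, ?_, ?_, ?_⟩
  · have key : ∀ t : ℝ,
        (1 / 4) * (2 * (2 - 3 * γ) * Ω * K +
          6 * Ω * (-γ * (S ^ 2 + Ω ^ 2 - 1) + 2 * S ^ 2 +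
            (Ω ^ 2 - 1) * Real.cos (2 * (Φ - t * ω)) + Ω ^ 2 - 1))
        = (1 / 2) * Ω * (-(3 * (γ - 1)) * (Ω ^ 2 - 1) - 3 * (γ - 2) * S ^ 2
            + (2 - 3 * γ) * K)
          + ((3 / 2) * Ω * (Ω ^ 2 - 1)) * Real.cos (2 * (Φ - t * ω)) :=
      fun t => by ring
    simp only [key]
    exact avg_helper ω Φ _ _ hω
  · have key : ∀ t : ℝ,
        (1 / 2) * S * (-(3 * (γ - 2)) * (S ^ 2 - 1) - 3 * (γ - 1) * Ω ^ 2
          + (2 - 3 * γ) * K + 3 * Ω ^ 2 * Real.cos (2 * (Φ - t * ω)))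
        = (1 / 2) * S * (-(3 * (γ - 2)) * (S ^ 2 - 1) - 3 * (γ - 1) * Ω ^ 2
            + (2 - 3 * γ) * K)
          + ((3 / 2) * S * Ω ^ 2) * Real.cos (2 * (Φ - t * ω)) :=
      fun t => by ring
    simp only [key]
    exact avg_helper ω Φ _ _ hω
  · have key : ∀ t : ℝ,
        K * (-(3 * γ) * (S ^ 2 + Ω ^ 2 - 1) + (2 - 3 * γ) * K + 6 * S ^ 2
          + 3 * Ω ^ 2 * Real.cos (2 * (Φ - t * ω)) + 3 * Ω ^ 2 - 2)
        = K * (-(3 * (γ - 1)) * Ω ^ 2 - 3 * (γ - 2) * S ^ 2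
            - (3 * γ - 2) * (K - 1))
          + (3 * K * Ω ^ 2) * Real.cos (2 * (Φ - t * ω)) :=
      fun t => by ring
    simp only [key]
    exact avg_helper ω Φ _ _ hω
  · rw [sincos_int ω Φ hω, mul_zero]
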